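/- arXiv:1502.00445 — 6 statements merged into one kernel-verified Lean document; each statement's English description precedes it below -/
import Mathlib

section
/- Let ε > 0 and let G be a bipartite graph with parts A₀, A₁ each of size n. Suppose (1) every vertex of G has degree at least εn, and (2) for every X₀ ⊆ A₀ and X₁ ⊆ A₁ with |X₀| = |X₁| = ⌈εn⌉, there is at least one edge between X₀ and X₁. Then G contains a perfect matching. -/
open scoped Classical

theorem bipartite_perfect_matching_of_degree_and_expansion
    {α β : Type*} [Fintype α] [Fintype β] [DecidableEq α] [DecidableEq β]
    (n : ℕ) (hn : 0 < n) (hcardα : Fintype.card α = n) (hcardβ : Fintype.card β = n)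
    (E : α → β → Prop) [∀ a b, Decidable (E a b)] (ε : ℝ) (hε : 0 < ε)
    (hdegA : ∀ a : α, ε * n ≤ (((Finset.univ : Finset β).filter fun b => E a b).card : ℝ))
    (hdegB : ∀ b : β, ε * n ≤ (((Finset.univ : Finset α).filter fun a => E a b).card : ℝ))
    (hcross : ∀ X₀ : Finset α, ∀ X₁ : Finset β,
      X₀.card = ⌈ε * n⌉₊ → X₁.card = ⌈ε * n⌉₊ → ∃ a ∈ X₀, ∃ b ∈ X₁, E a b) :
    ∃ f : α ≃ β, ∀ a : α, E a (f a) := by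
  set k := ⌈ε * n⌉₊ with hk
  set t : α → Finset β := fun a => (Finset.univ : Finset β).filter fun b => E a b with ht
  have hk1 : 1 ≤ k := Nat.one_le_ceil_iff.mpr (by positivity)
  -- degrees in terms of k
  have hdegA' : ∀ a, k ≤ (t a).card := fun a => Nat.ceil_le.mpr (hdegA a)
  have hdegB' : ∀ b, k ≤ ((Finset.univ : Finset α).filter fun a => E a b).card :=
    fun b => Nat.ceil_le.mpr (hdegB b)
  have hkn : k ≤ n := by
    have : Nonempty α := Fintype.card_pos_iff.mp (hcardα ▸ hn)
    obtain ⟨a⟩ := this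
    calc k ≤ (t a).card := hdegA' a
    _ ≤ Fintype.card β := Finset.card_le_univ _
    _ = n := hcardβ
  -- Hall's condition
  have hall : ∀ s : Finset α, s.card ≤ (s.biUnion t).card := by
    intro s
    by_cases hs : s = ∅
    · simp [hs]
    obtain ⟨a, ha⟩ := Finset.nonempty_iff_ne_empty.mpr hs
    rcases le_or_gt s.card k with h1 | h1
    · calc s.card ≤ k := h1
        _ ≤ (t a).card := hdegA' a
        _ ≤ (s.biUnion t).card :=
          Finset.card_le_card (fun b hb => Finset.mem_biUnion.mpr ⟨a, ha, hb⟩)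
    -- s.card > k
    have hcompl : ((Finset.univ : Finset β) \ s.biUnion t).card < k := by
      by_contra hge
      push_neg at hge
      obtain ⟨X₀, hX₀s, hX₀c⟩ := Finset.exists_subset_card_eq h1.le
      obtain ⟨X₁, hX₁s, hX₁c⟩ := Finset.exists_subset_card_eq hge
      obtain ⟨a', ha', b, hb, hab⟩ := hcross X₀ X₁ hX₀c hX₁c
      have : b ∈ s.biUnion t :=
        Finset.mem_biUnion.mpr ⟨a', hX₀s ha', by simp [ht, hab]⟩
      exact absurd this (Finset.mem_sdiff.mp (hX₁s hb)).2
    have hbig : n - k < (s.biUnion t).card := by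
      have := Finset.card_sdiff_add_card_eq_card
        (Finset.subset_univ (s.biUnion t))
      rw [Finset.card_univ, hcardβ] at this
      omega
    rcases le_or_gt s.card (n - k + 1) with h2 | h2
    · omega
    · -- s is large: every b has a neighbor in s
      have hsc : ((Finset.univ : Finset α) \ s).card < k := by
        have := Finset.card_sdiff_add_card_eq_card (Finset.subset_univ s)
        rw [Finset.card_univ, hcardα] at this
        omega
      have : (s.biUnion t) = Finset.univ := by
        apply Finset.eq_univ_of_forall
        intro b
        have hb : ¬ ((Finset.univ : Finset α).filter fun a => E a b) ⊆
            (Finset.univ : Finset α) \ s := by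
          intro hsub
          exact absurd (Finset.card_le_card hsub) (by have := hdegB' b; omega)
        obtain ⟨a', ha'f, ha'ns⟩ := Finset.not_subset.mp hb
        simp only [Finset.mem_filter, Finset.mem_univ, true_and] at ha'f
        have ha's : a' ∈ s := by
          by_contra h
          exact ha'ns (Finset.mem_sdiff.mpr ⟨Finset.mem_univ _, h⟩)
        exact Finset.mem_biUnion.mpr ⟨a', ha's, by simp [ht, ha'f]⟩
      rw [this, Finset.card_univ, hcardβ]
      calc s.card ≤ Fintype.card α := Finset.card_le_univ s
        _ = n := hcardα
  obtain ⟨f, hfinj, hft⟩ := (Finset.all_card_le_biUnion_card_iff_exists_injective t).mp hall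
  have hbij : Function.Bijective f :=
    (Fintype.bijective_iff_injective_and_card f).mpr ⟨hfinj, by rw [hcardα, hcardβ]⟩
  refine ⟨Equiv.ofBijective f hbij, fun a => ?_⟩
  have := hft a
  simpa [ht] using this
end

section
/- For every positive integer k, if G = (V, E) is an (R, c)-expander with c ≥ k and R·c ≥ (|V| + k)/2, then G is k-vertex-connected. -/
/-- The external neighborhood of a vertex set `U` in a graph `G`. -/
def extNbhd {V : Type*} [Fintype V] [DecidableEq V] (G : SimpleGraph V) [DecidableRel G.Adj]
    (U : Finset V) : Finset V :=
  Finset.univ.filter fun v => v ∉ U ∧ ∃ u ∈ U, G.Adj u v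

/-- `G` is k-vertex-connected: more than `k` vertices and deleting any set of fewer than `k`
vertices leaves a connected graph. -/
def IsKVertexConnected {V : Type*} [Fintype V] [DecidableEq V] (G : SimpleGraph V)
    (k : ℕ) : Prop :=
  k < Fintype.card V ∧
    ∀ s : Finset V, s.card < k → (G.induce ((↑(sᶜ) : Set V))).Connected

/-- Key counting lemma: a partition of `sᶜ` into two nonempty pieces with no crossing
edges contradicts the expansion hypotheses. -/
lemma key_contradiction
    {V : Type*} [Fintype V] [DecidableEq V] [Nonempty V]
    (G : SimpleGraph V) [DecidableRel G.Adj]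
    (k R : ℕ) (c : ℝ) (hk : 0 < k) (hc : (k : ℝ) ≤ c)
    (hexp : ∀ U : Finset V, U.card ≤ R → c * U.card ≤ ((extNbhd G U).card : ℝ))
    (hRc : ((Fintype.card V : ℝ) + k) / 2 ≤ R * c)
    (s A B : Finset V) (hs : s.card < k)
    (hA : A.Nonempty) (hB : B.Nonempty)
    (hdisj : Disjoint A B) (hunion : A ∪ B = sᶜ)
    (hAB : A.card ≤ B.card)
    (hedge : ∀ a ∈ A, ∀ b ∈ B, ¬ G.Adj a b) : False := by
  have hc0 : (0:ℝ) < c := lt_of_lt_of_le (by exact_mod_cast hk) hc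
  have hNA : extNbhd G A ⊆ s := by
    intro v hv
    simp only [extNbhd, Finset.mem_filter, Finset.mem_univ, true_and] at hv
    obtain ⟨hvA, u, hu, hadj⟩ := hv
    by_contra hvs
    have hvB : v ∈ B := by
      have : v ∈ A ∪ B := by rw [hunion, Finset.mem_compl]; exact hvs
      rcases Finset.mem_union.mp this with h | h
      · exact absurd h hvA
      · exact h
    exact hedge u hu v hvB hadj
  rcases le_or_gt A.card R with hR | hR
  · -- small side case
    have h1 := hexp A hR
    have h2 : ((extNbhd G A).card : ℝ) ≤ s.card := by
      exact_mod_cast Finset.card_le_card hNA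
    have h3 : (1:ℝ) ≤ A.card := by exact_mod_cast Finset.card_pos.mpr hA
    have h4 : c ≤ c * A.card := by nlinarith
    have h5 : (s.card : ℝ) + 1 ≤ k := by exact_mod_cast hs
    linarith
  · -- large side case
    obtain ⟨A', hA'sub, hA'card⟩ := Finset.exists_subset_card_eq (s := A) (n := R) (le_of_lt hR)
    have hN' : extNbhd G A' ⊆ (A \ A') ∪ s := by
      intro v hv
      simp only [extNbhd, Finset.mem_filter, Finset.mem_univ, true_and] at hv
      obtain ⟨hvA', u, hu, hadj⟩ := hv
      by_cases hvs : v ∈ s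
      · exact Finset.mem_union_right _ hvs
      · have : v ∈ A ∪ B := by rw [hunion, Finset.mem_compl]; exact hvs
        rcases Finset.mem_union.mp this with h | h
        · exact Finset.mem_union_left _ (Finset.mem_sdiff.mpr ⟨h, hvA'⟩)
        · exact absurd hadj (hedge u (hA'sub hu) v h)
    have h1 := hexp A' (le_of_eq hA'card)
    rw [hA'card] at h1
    have h2 : ((extNbhd G A').card : ℝ) ≤ ((A \ A').card : ℝ) + s.card := by
      have := Finset.card_le_card hN'
      have := Finset.card_union_le (A \ A') s
      push_cast
      exact_mod_cast le_trans (Nat.cast_le.mpr ‹(extNbhd G A').card ≤ ((A \ A') ∪ s).card›) (by exact_mod_cast this)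
    have hsd : ((A \ A').card : ℝ) = (A.card : ℝ) - R := by
      rw [Finset.card_sdiff_of_subset hA'sub, hA'card]
      have : R ≤ A.card := le_of_lt hR
      push_cast [this]
      ring
    have hcompl : A.card + B.card = Fintype.card V - s.card := by
      rw [← Finset.card_union_of_disjoint hdisj, hunion, Finset.card_compl]
    have hcompl' : (A.card : ℝ) + B.card = (Fintype.card V : ℝ) - s.card := by
      have hle : s.card ≤ Fintype.card V := Finset.card_le_univ s
      rw [← Nat.cast_sub hle]
      exact_mod_cast hcompl
    have hABr : (A.card : ℝ) ≤ B.card := by exact_mod_cast hAB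
    have hsk : (s.card : ℝ) + 1 ≤ k := by exact_mod_cast hs
    have hR0 : (0:ℝ) ≤ R := Nat.cast_nonneg R
    rw [hsd] at h2
    rw [mul_comm] at h1
    linarith

theorem expander_is_k_connected
    {V : Type*} [Fintype V] [DecidableEq V] [Nonempty V]
    (G : SimpleGraph V) [DecidableRel G.Adj]
    (k R : ℕ) (c : ℝ) (hk : 0 < k) (hc : (k : ℝ) ≤ c)
    (hexp : ∀ U : Finset V, U.card ≤ R → c * U.card ≤ ((extNbhd G U).card : ℝ))
    (hRc : ((Fintype.card V : ℝ) + k) / 2 ≤ R * c) :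
    IsKVertexConnected G k := by
  classical
  have hc0 : (0:ℝ) < c := lt_of_lt_of_le (by exact_mod_cast hk) hc
  have hn1 : 1 ≤ Fintype.card V := Fintype.card_pos
  -- R ≥ 1
  have hR1 : 1 ≤ R := by
    by_contra h
    have : R = 0 := by omega
    rw [this] at hRc
    push_cast at hRc
    have : (0:ℝ) < ((Fintype.card V : ℝ) + k) / 2 := by
      have : (1:ℝ) ≤ Fintype.card V := by exact_mod_cast hn1
      have : (1:ℝ) ≤ k := by exact_mod_cast hk
      linarith [(by exact_mod_cast hn1 : (1:ℝ) ≤ (Fintype.card V : ℝ))]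
    linarith
  -- k < card V
  have hkn : k < Fintype.card V := by
    obtain ⟨v⟩ := ‹Nonempty V›
    have h1 := hexp {v} (by simpa using hR1)
    simp only [Finset.card_singleton, Nat.cast_one, mul_one] at h1
    have hsub : extNbhd G {v} ⊆ Finset.univ.erase v := by
      intro w hw
      simp only [extNbhd, Finset.mem_filter, Finset.mem_univ, true_and,
        Finset.mem_singleton] at hw
      exact Finset.mem_erase.mpr ⟨hw.1, Finset.mem_univ w⟩
    have h2 : (extNbhd G {v}).card ≤ Fintype.card V - 1 := by
      have := Finset.card_le_card hsub
      simpa [Finset.card_erase_of_mem] using this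
    have h3 : ((extNbhd G {v}).card : ℝ) ≤ (Fintype.card V : ℝ) - 1 := by
      have h2' := (Nat.cast_le (α := ℝ)).mpr h2
      rwa [Nat.cast_sub hn1, Nat.cast_one] at h2' 
    have : (k:ℝ) + 1 ≤ Fintype.card V := by linarith
    exact_mod_cast (by exact_mod_cast this : k + 1 ≤ Fintype.card V)
  refine ⟨hkn, fun s hs => ?_⟩
  have hscompl_ne : (sᶜ : Finset V).Nonempty := by
    rw [← Finset.card_pos, Finset.card_compl]
    omega
  rw [SimpleGraph.connected_iff]
  constructor
  · -- preconnected
    intro x y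
    by_contra hcon
    -- the reachable set from x
    set H := G.induce ((↑(sᶜ) : Set V)) with hH
    let A : Finset V := Finset.univ.filter
      (fun v => ∃ hv : v ∈ ((↑(sᶜ) : Finset V) : Set V), H.Reachable x ⟨v, hv⟩)
    have hAmem : ∀ v, v ∈ A ↔ ∃ hv : v ∈ ((↑(sᶜ) : Finset V) : Set V), H.Reachable x ⟨v, hv⟩ := by
      intro v; simp [A]
    have hAsub : A ⊆ sᶜ := by
      intro v hv
      obtain ⟨hv', _⟩ := (hAmem v).mp hv
      exact_mod_cast hv'
    let B : Finset V := sᶜ \ A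
    have hxA : x.1 ∈ A := by
      refine (hAmem x.1).mpr ⟨x.2, ?_⟩
      exact SimpleGraph.Reachable.refl x
    have hyB : y.1 ∈ B := by
      refine Finset.mem_sdiff.mpr ⟨by exact_mod_cast y.2, ?_⟩
      intro hy
      obtain ⟨hy', hr⟩ := (hAmem y.1).mp hy
      exact hcon (hr.trans (by rfl))
    -- closure under edges
    have hclosed : ∀ a ∈ A, ∀ b ∈ (sᶜ : Finset V), G.Adj a b → b ∈ A := by
      intro a ha b hb hadj
      obtain ⟨ha', hr⟩ := (hAmem a).mp ha
      refine (hAmem b).mpr ⟨by exact_mod_cast hb, ?_⟩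
      refine hr.trans (SimpleGraph.Adj.reachable ?_)
      exact hadj
    have hedge : ∀ a ∈ A, ∀ b ∈ B, ¬ G.Adj a b := by
      intro a ha b hb hadj
      have hb' := Finset.mem_sdiff.mp hb
      exact hb'.2 (hclosed a ha b hb'.1 hadj)
    have hdisj : Disjoint A B := Finset.disjoint_sdiff
    have hunion : A ∪ B = sᶜ := Finset.union_sdiff_of_subset hAsub
    have hAne : A.Nonempty := ⟨x.1, hxA⟩
    have hBne : B.Nonempty := ⟨y.1, hyB⟩
    rcases le_total A.card B.card with hle | hle
    · exact key_contradiction G k R c hk hc hexp hRc s A B hs hAne hBne hdisj hunion hle hedge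
    · refine key_contradiction G k R c hk hc hexp hRc s B A hs hBne hAne hdisj.symm ?_ hle ?_
      · rw [Finset.union_comm]; exact hunion
      · intro b hb a ha hadj
        exact hedge a ha b hb hadj.symm
  · -- nonempty
    obtain ⟨v, hv⟩ := hscompl_ne
    exact ⟨⟨v, by exact_mod_cast hv⟩⟩
end

section
/- Consider a graph on n vertices constructed as follows: partition n - r vertices (where r < k - 1) into k - 1 sets V₁, …, V_{k-1} each of size ⌊n/(k-1)⌋ ≥ k, place a Hamilton cycle on each Vᵢ, place a perfect matching between Vᵢ and Vⱼ for every 1 ≤ i < j ≤ k-1, and join each of the remaining r vertices to k distinct vertices of V₁ ∪ … ∪ V_{k-1}. Then the resulting graph is k-vertex-connected. -/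
open SimpleGraph Walk

lemma reach_of_walk {V : Type*} [Fintype V] [DecidableEq V] (G : SimpleGraph V)
    (s : Finset V) {a b : V} (p : G.Walk a b) (h : ∀ x ∈ p.support, x ∉ s) :
    (G.induce ((↑(sᶜ) : Set V))).Reachable
      ⟨a, by simp [h a p.start_mem_support]⟩ ⟨b, by simp [h b p.end_mem_support]⟩ := by
  induction p with
  | nil => exact Reachable.refl _
  | @cons u v w hadj q ih =>
    have h2 : ∀ x ∈ q.support, x ∉ s := fun x hx => h x (by simp [hx])
    have := ih h2
    refine Reachable.trans (Adj.reachable ?_) this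
    exact hadj

lemma list_getLast_mem_tail {V : Type*} : ∀ (l : List V) (hl : l ≠ []) (ht : l.tail ≠ []),
    l.getLast hl ∈ l.tail := by
  intro l hl ht
  cases l with
  | nil => simp at hl
  | cons a t =>
    simp only [List.tail_cons] at ht ⊢
    rw [List.getLast_cons ht]
    exact List.getLast_mem ht

lemma mem_tail_of_closed {V : Type*} {G : SimpleGraph V} {v u : V} {c : G.Walk v v}
    (hnil : ¬ c.Nil) (hu : u ∈ c.support) : u ∈ c.support.tail := by
  have htne : c.support.tail ≠ [] := by
    cases c with
    | nil => simp at hnil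
    | cons h q => simp [SimpleGraph.Walk.support_cons]
  by_cases huv : u = v
  · subst huv
    have hlast : c.support.getLast (by simp) = u := c.getLast_support
    have hmem := list_getLast_mem_tail c.support (by simp) htne
    rwa [hlast] at hmem
  · cases c with
    | nil => simp at hnil
    | cons h q =>
      simp only [SimpleGraph.Walk.support_cons] at hu ⊢
      rcases List.mem_cons.mp hu with h1 | h1
      · exact absurd h1 huv
      · exact h1

lemma rotate_not_nil {V : Type*} [DecidableEq V] {G : SimpleGraph V} {v y : V}
    {c : G.Walk v v} (hnil : ¬ c.Nil) (hy : y ∈ c.support) : ¬ (c.rotate y hy).Nil := by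
  have hperm := (SimpleGraph.Walk.support_rotate c y hy).perm
  have hlen : (c.rotate y hy).support.tail.length = c.support.tail.length := hperm.length_eq
  rw [SimpleGraph.Walk.not_nil_iff_lt_length] at hnil ⊢
  have h1 : c.support.length = c.length + 1 := SimpleGraph.Walk.length_support c
  have h2 : (c.rotate y hy).support.length = (c.rotate y hy).length + 1 :=
    SimpleGraph.Walk.length_support _
  have := List.length_tail (l := c.support)
  have := List.length_tail (l := (c.rotate y hy).support)
  omega

lemma mem_support_rotate_iff {V : Type*} [DecidableEq V] {G : SimpleGraph V} {v y u : V}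
    {c : G.Walk v v} (hnil : ¬ c.Nil) (hy : y ∈ c.support) :
    u ∈ (c.rotate y hy).support ↔ u ∈ c.support := by
  have hperm := (SimpleGraph.Walk.support_rotate c y hy).perm
  constructor
  · intro hu
    exact List.mem_of_mem_tail (hperm.mem_iff.mp
      (mem_tail_of_closed (rotate_not_nil hnil hy) hu))
  · intro hu
    exact List.mem_of_mem_tail (hperm.mem_iff.mpr (mem_tail_of_closed hnil hu))

/-- Main cycle surgery: in a cycle, any two vertices different from `x` are joined by a walk
avoiding `x` whose support lies in the cycle's support. -/
lemma cycle_avoid {V : Type*} [DecidableEq V] {G : SimpleGraph V} {v x y z : V}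
    {c : G.Walk v v} (hc : c.IsCycle) (hy : y ∈ c.support) (hz : z ∈ c.support)
    (hyx : y ≠ x) (hzx : z ≠ x) :
    ∃ p : G.Walk y z, x ∉ p.support ∧ ∀ w ∈ p.support, w ∈ c.support := by
  have hnil : ¬ c.Nil := hc.not_nil
  by_cases hx : x ∈ c.support
  · -- rotate to start at x
    set c' := c.rotate x hx with hc'def
    have hc' : c'.IsCycle := hc.rotate hx
    have hnil' : ¬ c'.Nil := hc'.not_nil
    obtain ⟨u, hadj, q, hq⟩ := SimpleGraph.Walk.not_nil_iff.mp hnil'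
    have hqnodup : q.support.Nodup := by
      have := hc'.support_nodup
      rw [hq] at this
      simpa using this
    have hmemc' : ∀ w, w ∈ c'.support ↔ w ∈ c.support :=
      fun w => mem_support_rotate_iff hnil hx
    have hyq : y ∈ q.support := by
      have : y ∈ c'.support := (hmemc' y).mpr hy
      rw [hq] at this
      simp only [SimpleGraph.Walk.support_cons] at this
      rcases List.mem_cons.mp this with h1 | h1
      · exact absurd h1 hyx
      · exact h1
    have hzq : z ∈ q.support := by
      have : z ∈ c'.support := (hmemc' z).mpr hz
      rw [hq] at this
      simp only [SimpleGraph.Walk.support_cons] at this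
      rcases List.mem_cons.mp this with h1 | h1
      · exact absurd h1 hzx
      · exact h1
    -- x not in takeUntil of q for any w ≠ x
    have key : ∀ (w : V) (hw : w ∈ q.support), w ≠ x → x ∉ (q.takeUntil w hw).support := by
      intro w hw hwx hxin
      have hsplit := q.take_spec hw
      have hdrop : x ∈ (q.dropUntil w hw).support.tail := by
        have hxend : x ∈ (q.dropUntil w hw).support := SimpleGraph.Walk.end_mem_support _
        rw [SimpleGraph.Walk.support_eq_cons] at hxend
        rcases List.mem_cons.mp hxend with h1 | h1
        · exact absurd h1.symm hwx
        · exact h1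
      have heq : q.support = (q.takeUntil w hw).support ++ (q.dropUntil w hw).support.tail := by
        have h2 := SimpleGraph.Walk.support_append (q.takeUntil w hw) (q.dropUntil w hw)
        rw [hsplit] at h2
        exact h2
      rw [heq] at hqnodup
      have hd := (List.nodup_append.mp hqnodup).2.2
      exact hd x hxin x hdrop rfl
    have hsubq : ∀ w ∈ q.support, w ∈ c.support := by
      intro w hw
      have : w ∈ c'.support := by rw [hq]; simp [SimpleGraph.Walk.support_cons, hw]
      exact (hmemc' w).mp this
    refine ⟨(q.takeUntil y hyq).reverse.append (q.takeUntil z hzq), ?_, ?_⟩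
    · intro hxin
      rw [SimpleGraph.Walk.mem_support_append_iff] at hxin
      rcases hxin with h1 | h1
      · rw [SimpleGraph.Walk.support_reverse, List.mem_reverse] at h1
        exact key y hyq hyx h1
      · exact key z hzq hzx h1
    · intro w hw
      rw [SimpleGraph.Walk.mem_support_append_iff] at hw
      rcases hw with h1 | h1
      · rw [SimpleGraph.Walk.support_reverse, List.mem_reverse] at h1
        exact hsubq w (SimpleGraph.Walk.support_takeUntil_subset _ _ h1)
      · exact hsubq w (SimpleGraph.Walk.support_takeUntil_subset _ _ h1)
  · -- x not on the cycle at all: rotate at y and take until z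
    set c' := c.rotate y hy with hc'def
    have hzc' : z ∈ c'.support := (mem_support_rotate_iff hnil hy).mpr hz
    refine ⟨c'.takeUntil z hzc', ?_, ?_⟩
    · intro hxin
      exact hx ((mem_support_rotate_iff hnil hy).mp
        (SimpleGraph.Walk.support_takeUntil_subset _ _ hxin))
    · intro w hw
      exact (mem_support_rotate_iff hnil hy).mp
        (SimpleGraph.Walk.support_takeUntil_subset _ _ hw)

theorem cycles_plus_matchings_k_connected'
    {V : Type*} [Fintype V] [DecidableEq V] (n k t r : ℕ) (hk : 2 ≤ k)
    (hn : Fintype.card V = n) (ht : t = n / (k - 1)) (hkt : k ≤ t) (ht3 : 3 ≤ t)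
    (hr : r = n - (k - 1) * t) (hrk : r < k - 1)
    (G : SimpleGraph V) (P : Fin (k - 1) → Finset V)
    (hdisj : ∀ i j, i ≠ j → Disjoint (P i) (P j))
    (hcard : ∀ i, (P i).card = t)
    (hHam : ∀ i, ∃ (v : V) (c : G.Walk v v), c.IsCycle ∧ c.support.toFinset = P i)
    (hPM : ∀ i j, i ≠ j → ∃ f : {x // x ∈ P i} ≃ {x // x ∈ P j},
      ∀ x, G.Adj x.1 (f x).1)
    (hU : ∀ u : V, (∀ i, u ∉ P i) →
      ∃ s : Finset V, s.card = k ∧ ∀ w ∈ s, (∃ i, w ∈ P i) ∧ G.Adj u w) :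
    k < Fintype.card V ∧
    ∀ s : Finset V, s.card < k → (G.induce ((↑(sᶜ) : Set V))).Connected := by
  have hcardV : (k - 1) * t ≤ Fintype.card V := by
    have hun : ((Finset.univ : Finset (Fin (k - 1))).biUnion P).card = (k - 1) * t := by
      rw [Finset.card_biUnion (fun i _ j _ hij => hdisj i j hij)]
      simp [hcard, Finset.sum_const, Finset.card_univ, mul_comm]
    calc (k - 1) * t = ((Finset.univ : Finset (Fin (k - 1))).biUnion P).card := hun.symm
      _ ≤ (Finset.univ : Finset V).card := Finset.card_le_card (Finset.subset_univ _)
      _ = Fintype.card V := Finset.card_univ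
  constructor
  · have h3 : (k - 1) * 3 ≤ (k - 1) * t := Nat.mul_le_mul_left _ ht3
    omega
  intro s hs
  -- extract the Hamilton cycles
  choose cv cw hcyc hsupp using hHam
  have hsup : ∀ i a, a ∈ (cw i).support ↔ a ∈ P i := fun i a => by
    rw [← hsupp i, List.mem_toFinset]
  have hmem : ∀ a : V, a ∉ s → a ∈ ((↑(sᶜ) : Set V)) := fun a ha => by simp [ha]
  set H := G.induce ((↑(sᶜ) : Set V)) with hH
  have main : ∃ (v0 : V) (hv0 : v0 ∉ s), (∃ i, v0 ∈ P i) ∧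
      ∀ i, ∀ a, a ∈ P i → ∀ (ha : a ∉ s),
        H.Reachable ⟨a, hmem a ha⟩ ⟨v0, hmem v0 hv0⟩ := by
    by_cases hA : ∃ i0, ∀ a ∈ P i0, a ∉ s
    · -- Case A : an untouched part
      obtain ⟨i0, hi0⟩ := hA
      have hv0P : cv i0 ∈ P i0 := (hsup i0 _).mp (cw i0).start_mem_support
      have hv0s : cv i0 ∉ s := hi0 _ hv0P
      have reach0 : ∀ a, ∀ (haP : a ∈ P i0) (ha : a ∉ s),
          H.Reachable ⟨a, hmem a ha⟩ ⟨cv i0, hmem _ hv0s⟩ := by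
        intro a haP ha
        have haS : a ∈ (cw i0).support := (hsup i0 a).mpr haP
        have hps : ∀ x ∈ ((cw i0).takeUntil a haS).support, x ∉ s := fun x hx =>
          hi0 x ((hsup i0 x).mp (SimpleGraph.Walk.support_takeUntil_subset _ _ hx))
        exact (reach_of_walk G s ((cw i0).takeUntil a haS) hps).symm
      refine ⟨cv i0, hv0s, ⟨i0, hv0P⟩, ?_⟩
      intro i a haP ha
      by_cases hii : i = i0
      · subst hii; exact reach0 a haP ha
      · obtain ⟨f, hf⟩ := hPM i i0 hii
        have hbP : (f ⟨a, haP⟩).1 ∈ P i0 := (f ⟨a, haP⟩).2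
        have hbs : (f ⟨a, haP⟩).1 ∉ s := hi0 _ hbP
        have hadj : H.Adj ⟨a, hmem a ha⟩ ⟨(f ⟨a, haP⟩).1, hmem _ hbs⟩ := hf ⟨a, haP⟩
        exact hadj.reachable.trans (reach0 _ hbP hbs)
    · -- Case B : every part is hit exactly once
      push_neg at hA
      have hA' : ∀ i, ∃ a, a ∈ P i ∧ a ∈ s := by
        intro i
        obtain ⟨a, ha1, ha2⟩ := hA i
        exact ⟨a, ha1, ha2⟩
      choose x hxP hxs using hA'
      have hxinj : Function.Injective x := by
        intro i j hij
        by_contra hne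
        exact (Finset.disjoint_left.mp (hdisj i j hne)) (hxP i) (hij ▸ hxP j)
      have himg : Finset.image x Finset.univ ⊆ s := by
        intro a ha
        obtain ⟨i, _, rfl⟩ := Finset.mem_image.mp ha
        exact hxs i
      have hseq : Finset.image x Finset.univ = s := by
        apply Finset.eq_of_subset_of_card_le himg
        rw [Finset.card_image_of_injective _ hxinj, Finset.card_univ, Fintype.card_fin]
        omega
      have hmem_s : ∀ a, a ∈ s ↔ ∃ i, x i = a := by
        intro a
        rw [← hseq]
        simp
      have hnots : ∀ i a, a ∈ P i → a ≠ x i → a ∉ s := by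
        intro i a haP hax has
        obtain ⟨j, rfl⟩ := (hmem_s a).mp has
        by_cases hji : j = i
        · exact hax (by rw [hji])
        · exact (Finset.disjoint_left.mp (hdisj j i hji)) (hxP j) haP
      have reachin : ∀ i (y z : V), y ∈ P i → z ∈ P i → y ≠ x i → z ≠ x i →
          ∀ (hy' : y ∉ s) (hz' : z ∉ s),
            H.Reachable ⟨y, hmem y hy'⟩ ⟨z, hmem z hz'⟩ := by
        intro i y z hyP hzP hyx hzx hy' hz'
        obtain ⟨p, hpx, hpsub⟩ :=
          cycle_avoid (hcyc i) ((hsup i y).mpr hyP) ((hsup i z).mpr hzP) hyx hzx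
        have hps : ∀ w ∈ p.support, w ∉ s := fun w hw =>
          hnots i w ((hsup i w).mp (hpsub w hw)) (fun h => hpx (h ▸ hw))
        exact reach_of_walk G s p hps
      set z0 : Fin (k - 1) := ⟨0, by omega⟩ with hz0
      obtain ⟨v0, hv0P, hv0x⟩ :=
        Finset.exists_mem_ne (by rw [hcard z0]; omega) (x z0)
      have hv0s : v0 ∉ s := hnots z0 v0 hv0P hv0x
      refine ⟨v0, hv0s, ⟨z0, hv0P⟩, ?_⟩
      intro i a haP ha
      have hax : a ≠ x i := fun h => ha (h ▸ hxs i)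
      by_cases hii : i = z0
      · subst hii; exact reachin z0 a v0 haP hv0P hax hv0x ha hv0s
      · obtain ⟨f, hf⟩ := hPM i z0 hii
        -- find a good matching edge from part i to part z0
        have hbad : ((P i) \ {x i, (f.symm ⟨x z0, hxP z0⟩).1}).Nonempty := by
          rw [← Finset.card_pos]
          have h1 : ({x i, (f.symm ⟨x z0, hxP z0⟩).1} : Finset V).card ≤ 2 := by
            apply le_trans (Finset.card_insert_le _ _)
            simp
          have h2 := Finset.le_card_sdiff ({x i, (f.symm ⟨x z0, hxP z0⟩).1} : Finset V) (P i)
          rw [hcard i] at h2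
          omega
        obtain ⟨b, hb⟩ := hbad
        rw [Finset.mem_sdiff, Finset.mem_insert, Finset.mem_singleton] at hb
        obtain ⟨hbP, hbne⟩ := hb
        push_neg at hbne
        obtain ⟨hbx, hbsym⟩ := hbne
        have hbs : b ∉ s := hnots i b hbP hbx
        have hcP : (f ⟨b, hbP⟩).1 ∈ P z0 := (f ⟨b, hbP⟩).2
        have hcx : (f ⟨b, hbP⟩).1 ≠ x z0 := by
          intro h
          apply hbsym
          have : f ⟨b, hbP⟩ = ⟨x z0, hxP z0⟩ := Subtype.ext h
          rw [← this, Equiv.symm_apply_apply]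
        have hcs : (f ⟨b, hbP⟩).1 ∉ s := hnots z0 _ hcP hcx
        have hadj : H.Adj ⟨b, hmem b hbs⟩ ⟨(f ⟨b, hbP⟩).1, hmem _ hcs⟩ := hf ⟨b, hbP⟩
        exact ((reachin i a b haP hbP hax hbx ha hbs).trans hadj.reachable).trans
          (reachin z0 _ v0 hcP hv0P hcx hv0x hcs hv0s)
  obtain ⟨v0, hv0, ⟨j0, hv0P⟩, hreach⟩ := main
  rw [SimpleGraph.connected_iff]
  have key : ∀ (a : ↑((↑(sᶜ) : Set V))), H.Reachable a ⟨v0, hmem v0 hv0⟩ := by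
    rintro ⟨a, ha⟩
    have has : a ∉ s := by simpa using ha
    by_cases hP : ∃ i, a ∈ P i
    · obtain ⟨i, hi⟩ := hP
      exact hreach i a hi has
    · push_neg at hP
      obtain ⟨S', hS'card, hS'⟩ := hU a hP
      have hns : ¬ S' ⊆ s := by
        intro hsub
        have := Finset.card_le_card hsub
        omega
      obtain ⟨w, hwS', hws⟩ := Finset.not_subset.mp hns
      obtain ⟨⟨j, hwP⟩, hadjw⟩ := hS' w hwS'
      have hadj : H.Adj ⟨a, hmem a has⟩ ⟨w, hmem w hws⟩ := hadjw
      exact hadj.reachable.trans (hreach j w hwP hws)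
  constructor
  · intro a b
    exact (key a).trans (key b).symm
  · exact ⟨⟨v0, hmem v0 hv0⟩⟩


theorem cycles_plus_matchings_k_connected
    {V : Type*} [Fintype V] [DecidableEq V] (n k t r : ℕ) (hk : 2 ≤ k)
    (hn : Fintype.card V = n) (ht : t = n / (k - 1)) (hkt : k ≤ t) (ht3 : 3 ≤ t)
    (hr : r = n - (k - 1) * t) (hrk : r < k - 1)
    (G : SimpleGraph V) (P : Fin (k - 1) → Finset V)
    (hdisj : ∀ i j, i ≠ j → Disjoint (P i) (P j))
    (hcard : ∀ i, (P i).card = t)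
    (hHam : ∀ i, ∃ (v : V) (c : G.Walk v v), c.IsCycle ∧ c.support.toFinset = P i)
    (hPM : ∀ i j, i ≠ j → ∃ f : {x // x ∈ P i} ≃ {x // x ∈ P j},
      ∀ x, G.Adj x.1 (f x).1)
    (hU : ∀ u : V, (∀ i, u ∉ P i) →
      ∃ s : Finset V, s.card = k ∧ ∀ w ∈ s, (∃ i, w ∈ P i) ∧ G.Adj u w) :
    IsKVertexConnected G k := by
  unfold IsKVertexConnected
  exact cycles_plus_matchings_k_connected' n k t r hk hn ht hkt ht3 hr hrk G P
    hdisj hcard hHam hPM hU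
end

section
/- Let X be a hypergeometrically distributed random variable HG(N, K, n) with mean μ = nK/N. Then for every a > 0, P(X < (1-a)μ) < exp(-a²μ/2), and for every 0 < a < 1, P(X > (1+a)μ) < exp(-a²μ/3). -/
open Finset Real

lemma pow_mul_le_amgm (n : ℕ) (hn : 1 ≤ n) (x y : ℝ) (hx : 0 ≤ x) (hy : 0 ≤ y) :
    x ^ (n - 1) * y ≤ ((((n : ℝ) - 1) * x + y) / n) ^ n := by
  have hn0 : (0:ℝ) < n := by exact_mod_cast hn
  have hn1 : (0:ℝ) ≤ (n:ℝ) - 1 := by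
    have : (1:ℝ) ≤ n := by exact_mod_cast hn
    linarith
  set m : ℝ := (((n : ℝ) - 1) * x + y) / n with hmdef
  have hm : 0 ≤ m := by positivity
  rcases eq_or_lt_of_le hx with hx0 | hx0
  · -- x = 0
    rcases Nat.lt_or_ge n 2 with h2 | h2
    · interval_cases n
      · simp [hmdef]
    · have h1 : 1 ≤ n - 1 := by omega
      rw [← hx0]
      rw [zero_pow (by omega : n - 1 ≠ 0)]
      simpa using pow_nonneg hm n
  · -- 0 < x
    have hbern := one_add_mul_le_pow (a := m / x - 1) (by
      have : 0 ≤ m / x := div_nonneg hm hx0.le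
      linarith) n
    have h1 : (1 : ℝ) + n * (m / x - 1) = y / x := by
      have hnm : (n : ℝ) * m = ((n : ℝ) - 1) * x + y := by
        rw [hmdef]; field_simp
      field_simp
      nlinarith [hnm]
    rw [h1] at hbern
    have h2 : (1 + (m / x - 1)) = m / x := by ring
    rw [h2, div_pow] at hbern
    have hxn : (0:ℝ) < x ^ n := pow_pos hx0 n
    rw [div_le_div_iff₀ hx0 hxn] at hbern
    have hxs : x ^ n = x ^ (n - 1) * x := by
      conv_lhs => rw [show n = (n-1) + 1 by omega]
      rw [pow_succ]
    rw [hxs] at hbern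
    calc x ^ (n-1) * y = y * x ^ (n-1) := by ring
    _ ≤ m ^ n := by
        have := hbern
        nlinarith [hbern, hx0]

lemma exp_cubic_le (t : ℝ) (ht : 0 ≤ t) : 1 + t + t^2/2 + t^3/6 ≤ Real.exp t := by
  have h := Real.sum_le_exp_of_nonneg ht 4
  simp [Finset.sum_range_succ, Nat.factorial] at h
  linarith

lemma exp_neg_le_quad (t : ℝ) (ht : 0 ≤ t) : Real.exp (-t) ≤ 1 - t + t^2/2 := by
  have hvq := exp_cubic_le t ht
  have hq0 : (0:ℝ) ≤ 1 - t + t^2/2 := by nlinarith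
  have h2 := mul_le_mul_of_nonneg_left hvq hq0
  have h3 : (1 - t + t^2/2) * (1 + t + t^2/2 + t^3/6)
      = 1 + t^3/6 + t^4/12 + t^5/12 := by ring
  rw [h3] at h2
  have key : 1 ≤ (1 - t + t^2/2) * Real.exp t := by
    nlinarith [pow_nonneg ht 3, pow_nonneg ht 4, pow_nonneg ht 5]
  have hv0 : (0:ℝ) < Real.exp t := Real.exp_pos t
  rw [Real.exp_neg]
  rw [inv_le_iff_one_le_mul₀ hv0]
  linarith [key]

lemma sinh_ge (t : ℝ) (ht : 0 ≤ t) : 2*t ≤ Real.exp t - Real.exp (-t) := by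
  have h1 := exp_cubic_le t ht
  have h2 := exp_neg_le_quad t ht
  nlinarith [pow_nonneg ht 3]

-- L3: lower tail exponent
lemma lower_exponent (a : ℝ) (ha : 0 < a) (ha1 : a < 1) :
    -a - (1 - a) * Real.log (1 - a) ≤ -(a ^ 2 / 2) := by
  have h1a : (0:ℝ) < 1 - a := by linarith
  have hu : Real.exp (-(-Real.log (1 - a))) = 1 - a := by
    rw [neg_neg, Real.exp_log h1a]
  have ht : 0 ≤ -Real.log (1 - a) := by
    have : Real.log (1 - a) ≤ 0 := Real.log_nonpos (by linarith) (by linarith)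
    linarith
  have hs := sinh_ge _ ht
  rw [hu] at hs
  -- hs : 2 * (-log(1-a)) ≤ exp(-log(1-a)) - (1-a)
  have hv : Real.exp (-Real.log (1 - a)) = (1 - a)⁻¹ := by
    rw [Real.exp_neg, Real.exp_log h1a]
  rw [hv] at hs
  -- multiply hs by (1-a)/2 ≥ 0
  have := mul_le_mul_of_nonneg_left hs (by linarith : (0:ℝ) ≤ (1-a)/2)
  have hinv : (1 - a) * (1 - a)⁻¹ = 1 := mul_inv_cancel₀ (ne_of_gt h1a)
  nlinarith [this, hinv]


-- L2: upper tail exponent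
lemma upper_exponent (a : ℝ) (ha : 0 < a) (ha1 : a < 1) :
    a - (1 + a) * Real.log (1 + a) ≤ -(a ^ 2 / 3) := by
  have h1a : (0:ℝ) < 1 + a := by linarith
  set t : ℝ := Real.log (1 + a) with htdef
  have hvt : Real.exp t = 1 + a := Real.exp_log h1a
  have ht : 0 ≤ t := Real.log_nonneg (by linarith)
  have ht7 : t ≤ 0.7 := by
    rw [htdef, Real.log_le_iff_le_exp h1a]
    have := exp_cubic_le 0.7 (by norm_num)
    norm_num at this ⊢
    linarith
  have ht1 : t ≤ 1 := by linarith
  have hv : Real.exp t ≤ 1 + t + t^2/2 + t^3/6 + 5*t^4/96 := by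
    have h := Real.exp_bound' ht ht1 (n := 4) (by norm_num)
    simp [Finset.sum_range_succ, Nat.factorial] at h
    convert h using 1
    ring
  have hu : 1 - t + t^2/2 - t^3/6 - 5*t^4/96 ≤ Real.exp (-t) := by
    have habs : |(-t)| ≤ 1 := by rw [abs_neg, abs_of_nonneg ht]; linarith
    have h := Real.exp_bound habs (n := 4) (by norm_num)
    simp [Finset.sum_range_succ, Nat.factorial] at h
    rw [abs_le] at h
    have h1 := h.1
    rw [abs_of_nonneg ht] at h1
    nlinarith [h1]
  have key : Real.exp t - 2 * Real.exp (-t) + 1 ≤ 3 * t := by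
    nlinarith [hv, hu, sq_nonneg t, mul_nonneg (mul_nonneg ht ht) ht,
      mul_nonneg (mul_nonneg (mul_nonneg ht ht) ht) ht, ht7, ht]
  have hv0 : (0:ℝ) < Real.exp t := Real.exp_pos t
  have huv : Real.exp (-t) * Real.exp t = 1 := by rw [← Real.exp_add]; simp
  have hfin := mul_le_mul_of_nonneg_left key hv0.le
  -- hfin : exp t * (exp t - 2 exp(-t) + 1) ≤ exp t * (3t)
  rw [← hvt]
  nlinarith [hfin, huv, hv0]
lemma combine_step (Nn m Knat : ℕ) (hN : 1 ≤ Nn) (hK : Knat + 1 ≤ Nn) (z : ℝ) (hz : 0 ≤ z) :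
    (((Nn-1).choose (m+1) : ℝ)) * (1 + ((Knat:ℝ) / ((Nn:ℝ)-1)) * (z-1)) ^ (m+1)
      + z * ((((Nn-1).choose m : ℝ)) * (1 + ((Knat:ℝ) / ((Nn:ℝ)-1)) * (z-1)) ^ m)
    ≤ ((Nn.choose (m+1) : ℝ)) * (1 + (((Knat:ℝ)+1) / (Nn:ℝ)) * (z-1)) ^ (m+1) := by
  set B : ℝ := 1 + ((Knat:ℝ) / ((Nn:ℝ)-1)) * (z-1) with hBdef
  set Cc : ℝ := 1 + (((Knat:ℝ)+1) / (Nn:ℝ)) * (z-1) with hCdef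
  have hNr0 : (0:ℝ) < Nn := by exact_mod_cast hN
  rcases Nat.lt_or_ge Nn (m+1) with hmn | hmn
  · -- degenerate: all binomials vanish
    have h1 : (Nn-1).choose (m+1) = 0 := Nat.choose_eq_zero_of_lt (by omega)
    have h2 : (Nn-1).choose m = 0 := Nat.choose_eq_zero_of_lt (by omega)
    have h3 : Nn.choose (m+1) = 0 := Nat.choose_eq_zero_of_lt (by omega)
    rw [h1, h2, h3]
    simp
  · have hmn' : ((m:ℝ)+1) ≤ (Nn:ℝ) := by exact_mod_cast hmn
    -- nonnegativity of B
    have hB0 : 0 ≤ B := by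
      rcases Nat.eq_zero_or_pos Knat with hK0 | hK0
      · subst hK0; simp [hBdef]
      · have hN2 : 2 ≤ Nn := by omega
        have h2 : (0:ℝ) < (Nn:ℝ) - 1 := by
          have : (2:ℝ) ≤ Nn := by exact_mod_cast hN2
          linarith
        have h1 : (Knat:ℝ) ≤ (Nn:ℝ) - 1 := by
          have : (Knat:ℝ) + 1 ≤ (Nn:ℝ) := by exact_mod_cast hK
          linarith
        have hk0 : 0 ≤ (Knat:ℝ) / ((Nn:ℝ)-1) := by positivity
        have hk1 : (Knat:ℝ) / ((Nn:ℝ)-1) ≤ 1 := (div_le_one h2).mpr h1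
        rw [hBdef]
        nlinarith [mul_nonneg hk0 hz]
    set D : ℝ := (((Nn:ℝ) - ((m:ℝ)+1)) * B + ((m:ℝ)+1) * z) / Nn with hDdef
    have hD0 : 0 ≤ D := by
      apply div_nonneg _ hNr0.le
      have : 0 ≤ (Nn:ℝ) - ((m:ℝ)+1) := by linarith
      positivity
    have hne0 : (Nn:ℝ) ≠ 0 := ne_of_gt hNr0
    have hid : (m:ℝ) * B + D = ((m:ℝ)+1) * Cc := by
      have hk : ((Knat:ℝ)/((Nn:ℝ)-1)) * ((Nn:ℝ)-1) = Knat := by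
        rcases eq_or_ne ((Nn:ℝ)-1) 0 with h|h
        · have hNn1 : (Nn:ℝ) = 1 := by linarith
          have hNn1' : Nn = 1 := by exact_mod_cast hNn1
          have hK0 : Knat = 0 := by omega
          subst hK0; simp
        · exact div_mul_cancel₀ _ h
      have hr : (((Knat:ℝ)+1)/(Nn:ℝ)) * Nn = (Knat:ℝ)+1 := div_mul_cancel₀ _ hne0
      have h1 : D * Nn = ((Nn:ℝ) - ((m:ℝ)+1)) * B + ((m:ℝ)+1) * z := by
        rw [hDdef]; exact div_mul_cancel₀ _ hne0
      apply mul_right_cancel₀ hne0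
      rw [hBdef, hCdef]
      rw [hBdef] at h1
      linear_combination h1 + ((m:ℝ)+1)*(z-1)*hk - ((m:ℝ)+1)*(z-1)*hr
    have hBD : B ^ m * D ≤ Cc ^ (m+1) := by
      have h := pow_mul_le_amgm (m+1) (by omega) B D hB0 hD0
      simp only [Nat.add_sub_cancel] at h
      have hcast : (((m+1:ℕ):ℝ) - 1) = (m:ℝ) := by push_cast; ring
      rw [hcast] at h
      have hcast2 : ((m:ℝ) * B + D) / ((m+1:ℕ):ℝ) = Cc := by
        rw [hid]; push_cast
        field_simp
      rwa [hcast2] at h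
    -- binomial identities
    have hP : (Nn.choose (m+1) : ℝ) = ((Nn-1).choose m : ℝ) + ((Nn-1).choose (m+1) : ℝ) := by
      have := Nat.choose_succ_succ' (Nn-1) m
      rw [show Nn - 1 + 1 = Nn by omega] at this
      exact_mod_cast this
    have hA : ((Nn-1).choose m : ℝ) * Nn = (Nn.choose (m+1) : ℝ) * ((m:ℝ)+1) := by
      have := Nat.add_one_mul_choose_eq (Nn-1) m
      rw [show Nn - 1 + 1 = Nn by omega] at this
      have : Nn * (Nn-1).choose m = Nn.choose (m+1) * (m+1) := this
      exact_mod_cast by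
        push_cast [← this]
        ring
    have hBid : ((Nn-1).choose (m+1) : ℝ) * Nn = (Nn.choose (m+1) : ℝ) * ((Nn:ℝ) - ((m:ℝ)+1)) := by
      nlinarith [hP, hA]
    have hc0 : (0:ℝ) ≤ (Nn.choose (m+1) : ℝ) := by positivity
    rw [← mul_le_mul_iff_right₀ hNr0]
    have hNrD : (Nn:ℝ) * D = ((Nn:ℝ) - ((m:ℝ)+1)) * B + ((m:ℝ)+1) * z := by
      rw [hDdef]; field_simp
    calc (Nn:ℝ) * ((((Nn-1).choose (m+1) : ℝ)) * B ^ (m+1)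
            + z * ((((Nn-1).choose m : ℝ)) * B ^ m))
        = (((Nn-1).choose (m+1) : ℝ) * Nn) * B ^ (m+1)
            + (((Nn-1).choose m : ℝ) * Nn) * (z * B ^ m) := by ring
      _ = (Nn.choose (m+1) : ℝ) * ((((Nn:ℝ) - ((m:ℝ)+1)) * B ^ (m+1))
            + (((m:ℝ)+1) * (z * B ^ m))) := by rw [hA, hBid]; ring
      _ = (Nn.choose (m+1) : ℝ) * ((Nn:ℝ) * (B ^ m * D)) := by
          rw [show (Nn:ℝ) * (B ^ m * D) = B ^ m * ((Nn:ℝ) * D) by ring, hNrD, pow_succ]; ring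
      _ ≤ (Nn.choose (m+1) : ℝ) * ((Nn:ℝ) * Cc ^ (m+1)) := by
          apply mul_le_mul_of_nonneg_left _ hc0
          exact mul_le_mul_of_nonneg_left hBD hNr0.le
      _ = (Nn:ℝ) * ((Nn.choose (m+1) : ℝ) * Cc ^ (m+1)) := by ring
lemma key_sum_le {α : Type*} [DecidableEq α] :
    ∀ (K : ℕ) (A S : Finset α), S ⊆ A → S.card = K → ∀ (n : ℕ) (z : ℝ), 0 ≤ z →
    ∑ s ∈ A.powersetCard n, z ^ (s ∩ S).card ≤
      (A.card.choose n : ℝ) * (1 + ((S.card : ℝ) / (A.card : ℝ)) * (z - 1)) ^ n := by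
  intro K
  induction K with
  | zero =>
    intro A S hSA hScard n z hz
    rw [Finset.card_eq_zero] at hScard
    subst hScard
    simp [Finset.inter_empty, Finset.card_powersetCard]
  | succ K ih =>
    intro A S hSA hScard n z hz
    have hSne : S.Nonempty := Finset.card_pos.mp (by omega)
    obtain ⟨e, he⟩ := hSne
    have heA : e ∈ A := hSA he
    set A' := A.erase e with hA'def
    set S' := S.erase e with hS'def
    have hS'A' : S' ⊆ A' := Finset.erase_subset_erase e hSA
    have hS'card : S'.card = K := by
      rw [hS'def, Finset.card_erase_of_mem he, hScard]
      omega

    have hA'card : A'.card = A.card - 1 := Finset.card_erase_of_mem heA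
    have hApos : 1 ≤ A.card := Finset.card_pos.mpr ⟨e, heA⟩
    have hinsert : A = insert e A' := (Finset.insert_erase heA).symm
    have hnotmem : e ∉ A' := Finset.notMem_erase e A
    -- case n = 0
    cases n with
    | zero => simp
    | succ m =>
      -- split the powerset
      have hsplit : A.powersetCard (m+1)
          = A'.powersetCard (m+1) ∪ (A'.powersetCard m).image (insert e) := by
        conv_lhs => rw [hinsert]
        exact Finset.powersetCard_succ_insert hnotmem m
      have hdisj : Disjoint (A'.powersetCard (m+1)) ((A'.powersetCard m).image (insert e)) := by
        rw [Finset.disjoint_left]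
        intro s hs hs'
        obtain ⟨t, ht, rfl⟩ := Finset.mem_image.mp hs'
        have hsub := (Finset.mem_powersetCard.mp hs).1
        exact hnotmem (hsub (Finset.mem_insert_self e t))
      rw [hsplit, Finset.sum_union hdisj]
      -- first sum
      have hsum1 : ∑ s ∈ A'.powersetCard (m+1), z ^ (s ∩ S).card
          = ∑ s ∈ A'.powersetCard (m+1), z ^ (s ∩ S').card := by
        apply Finset.sum_congr rfl
        intro s hs
        have hes : e ∉ s := fun hc => hnotmem ((Finset.mem_powersetCard.mp hs).1 hc)
        congr 2
        rw [hS'def]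
        ext x
        simp only [Finset.mem_inter, Finset.mem_erase]
        constructor
        · rintro ⟨hx1, hx2⟩
          exact ⟨hx1, fun hxe => hes (hxe ▸ hx1), hx2⟩
        · rintro ⟨hx1, _, hx2⟩
          exact ⟨hx1, hx2⟩
      have ih1 := ih A' S' hS'A' hS'card (m+1) z hz
      have ih2 := ih A' S' hS'A' hS'card m z hz
      rw [hS'card, hA'card, Nat.cast_sub hApos, Nat.cast_one] at ih1 ih2
      have hsum2 : ∑ s ∈ (A'.powersetCard m).image (insert e), z ^ (s ∩ S).card
          = z * ∑ s ∈ A'.powersetCard m, z ^ (s ∩ S').card := by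
        rw [Finset.sum_image (by
          intro s hs t ht hst
          have hes : e ∉ s := fun hc => hnotmem ((Finset.mem_powersetCard.mp hs).1 hc)
          have het : e ∉ t := fun hc => hnotmem ((Finset.mem_powersetCard.mp ht).1 hc)
          have := congrArg (fun u => Finset.erase u e) hst
          simpa [Finset.erase_insert hes, Finset.erase_insert het] using this)]
        rw [Finset.mul_sum]
        apply Finset.sum_congr rfl
        intro s hs
        have hes : e ∉ s := fun hc => hnotmem ((Finset.mem_powersetCard.mp hs).1 hc)
        have h1 : insert e s ∩ S = insert e (s ∩ S') := by
          ext x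
          rcases eq_or_ne x e with rfl | hxe
          · simp [he]
          · simp only [Finset.mem_insert, Finset.mem_inter, hS'def, Finset.mem_erase, hxe]
            tauto
        have h2 : e ∉ s ∩ S' := by
          simp [hS'def]
        rw [h1, Finset.card_insert_of_notMem h2, pow_succ]
        ring
      have hKA : K + 1 ≤ A.card := by
        have := Finset.card_le_card hSA
        omega
      have hcomb := combine_step A.card m K hApos hKA z hz
      calc (∑ s ∈ A'.powersetCard (m+1), z ^ (s ∩ S).card)
            + ∑ s ∈ (A'.powersetCard m).image (insert e), z ^ (s ∩ S).card
          ≤ (((A.card-1).choose (m+1) : ℝ)) * (1 + ((K:ℝ) / ((A.card:ℝ)-1)) * (z-1)) ^ (m+1)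
            + z * ((((A.card-1).choose m : ℝ)) * (1 + ((K:ℝ) / ((A.card:ℝ)-1)) * (z-1)) ^ m) := by
            apply add_le_add
            · rw [hsum1]; exact ih1
            · rw [hsum2]; exact mul_le_mul_of_nonneg_left ih2 hz
        _ ≤ ((A.card.choose (m+1) : ℝ)) * (1 + (((K:ℝ)+1) / (A.card:ℝ)) * (z-1)) ^ (m+1) := hcomb
        _ = ((A.card.choose (m+1) : ℝ)) * (1 + ((S.card:ℝ) / (A.card:ℝ)) * (z-1)) ^ (m+1) := by
            rw [hScard]; push_cast; ring

/-- Chernoff-type bounds for the hypergeometric distribution `HG(N, K, n)`, modelled as the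
uniform distribution over `n`-element subsets of an `N`-element population in which a fixed
`K`-element subset `S` marks the successes. -/
theorem hypergeometric_chernoff (N K n : ℕ) (hK : K ≤ N) (hn : n ≤ N)
    (S : Finset (Fin N)) (hS : S.card = K) (μ : ℝ) (hμ : μ = n * K / N) :
    (∀ a : ℝ, 0 < a →
      (((Finset.powersetCard n (Finset.univ : Finset (Fin N))).filter
          fun s => ((s ∩ S).card : ℝ) < (1 - a) * μ).card : ℝ) /
        ((Finset.powersetCard n (Finset.univ : Finset (Fin N))).card : ℝ)
        < Real.exp (-(a ^ 2 * μ / 2))) ∧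
    (∀ a : ℝ, 0 < a → a < 1 →
      (((Finset.powersetCard n (Finset.univ : Finset (Fin N))).filter
          fun s => (1 + a) * μ < ((s ∩ S).card : ℝ)).card : ℝ) /
        ((Finset.powersetCard n (Finset.univ : Finset (Fin N))).card : ℝ)
        < Real.exp (-(a ^ 2 * μ / 3))) := by
  have hμ0 : 0 ≤ μ := by rw [hμ]; positivity
  set P := Finset.powersetCard n (Finset.univ : Finset (Fin N)) with hPdef
  have hcardP : (P.card : ℝ) = (N.choose n : ℝ) := by
    rw [hPdef, Finset.card_powersetCard, Finset.card_univ, Fintype.card_fin]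
  have hPpos : (0:ℝ) < (P.card : ℝ) := by
    rw [hcardP]
    exact_mod_cast Nat.choose_pos hn
  have hCpos : (0:ℝ) ≤ (N.choose n : ℝ) := by positivity
  have hkey : ∀ z : ℝ, 0 ≤ z →
      ∑ s ∈ P, z ^ (s ∩ S).card ≤ (N.choose n : ℝ) * Real.exp (μ * (z - 1)) := by
    intro z hz
    have h := key_sum_le K Finset.univ S (Finset.subset_univ S) hS n z hz
    rw [Finset.card_univ, Fintype.card_fin, hS] at h
    refine h.trans (mul_le_mul_of_nonneg_left ?_ hCpos)
    have hb0 : 0 ≤ 1 + ((K:ℝ)/(N:ℝ)) * (z-1) := by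
      rcases Nat.eq_zero_or_pos N with h0 | h0
      · subst h0; simp
      · have hN0 : (0:ℝ) < N := by exact_mod_cast h0
        have hk0 : 0 ≤ (K:ℝ)/(N:ℝ) := by positivity
        have hk1 : (K:ℝ)/(N:ℝ) ≤ 1 := by
          rw [div_le_one hN0]; exact_mod_cast hK
        nlinarith [mul_nonneg hk0 hz]
    have hle : 1 + ((K:ℝ)/(N:ℝ)) * (z-1) ≤ Real.exp (((K:ℝ)/(N:ℝ)) * (z-1)) := by
      linarith [Real.add_one_le_exp (((K:ℝ)/(N:ℝ)) * (z-1))]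
    calc (1 + ((K:ℝ)/(N:ℝ)) * (z-1)) ^ n
        ≤ (Real.exp (((K:ℝ)/(N:ℝ)) * (z-1))) ^ n := pow_le_pow_left₀ hb0 hle n
      _ = Real.exp ((n:ℝ) * (((K:ℝ)/(N:ℝ)) * (z-1))) := by rw [← Real.exp_nat_mul]
      _ = Real.exp (μ * (z - 1)) := by rw [hμ]; ring_nf
  constructor
  · -- lower tail
    intro a ha
    set F := P.filter (fun s => ((s ∩ S).card : ℝ) < (1 - a) * μ) with hFdef
    rcases F.eq_empty_or_nonempty with hF | hF
    · rw [hF]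
      simp only [Finset.card_empty, Nat.cast_zero, zero_div]
      exact Real.exp_pos _
    rcases lt_or_ge a 1 with ha1 | ha1
    · set z : ℝ := 1 - a with hzdef
      set t : ℝ := (1 - a) * μ with htdef
      have hz0 : 0 < z := by rw [hzdef]; linarith
      have hz1 : z < 1 := by rw [hzdef]; linarith
      have hzt : (0:ℝ) < z ^ t := Real.rpow_pos_of_pos hz0 t
      have h5 : Real.exp (μ * (z-1) - t * Real.log z) ≤ Real.exp (-(a^2 * μ / 2)) := by
        apply Real.exp_le_exp.mpr
        have hL := lower_exponent a ha ha1
        have := mul_le_mul_of_nonneg_right hL hμ0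
        rw [hzdef, htdef]
        nlinarith [this]
      have big : (F.card : ℝ) * z ^ t < (Real.exp (-(a^2 * μ / 2)) * (P.card:ℝ)) * z ^ t := by
        calc (F.card : ℝ) * z ^ t = ∑ _s ∈ F, z ^ t := by
              rw [Finset.sum_const, nsmul_eq_mul]
          _ < ∑ s ∈ F, z ^ (((s ∩ S).card : ℕ) : ℝ) := by
              apply Finset.sum_lt_sum_of_nonempty hF
              intro s hs
              have hst := (Finset.mem_filter.mp hs).2
              exact Real.rpow_lt_rpow_of_exponent_gt hz0 hz1 hst
          _ = ∑ s ∈ F, z ^ (s ∩ S).card := by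
              apply Finset.sum_congr rfl
              intro s _
              exact Real.rpow_natCast z _
          _ ≤ ∑ s ∈ P, z ^ (s ∩ S).card := by
              apply Finset.sum_le_sum_of_subset_of_nonneg (Finset.filter_subset _ _)
              intro s _ _
              exact pow_nonneg hz0.le _
          _ ≤ (N.choose n : ℝ) * Real.exp (μ * (z - 1)) := hkey z hz0.le
          _ = (N.choose n : ℝ) * Real.exp (μ * (z-1) - t * Real.log z) * z ^ t := by
              rw [Real.rpow_def_of_pos hz0, mul_assoc, ← Real.exp_add]
              congr 2
              ring
          _ ≤ (N.choose n : ℝ) * Real.exp (-(a^2 * μ / 2)) * z ^ t := by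
              exact mul_le_mul_of_nonneg_right (mul_le_mul_of_nonneg_left h5 hCpos) hzt.le
          _ = (Real.exp (-(a^2 * μ / 2)) * (P.card:ℝ)) * z ^ t := by rw [hcardP]; ring
      rw [div_lt_iff₀ hPpos]
      exact (mul_lt_mul_iff_left₀ hzt).mp big
    · -- a ≥ 1 : filter is empty, contradiction with nonempty
      exfalso
      obtain ⟨s, hs⟩ := hF
      have h2 := (Finset.mem_filter.mp hs).2
      have h3 : (1 - a) * μ ≤ 0 := mul_nonpos_of_nonpos_of_nonneg (by linarith) hμ0
      have h4 : (0:ℝ) ≤ ((s ∩ S).card : ℝ) := by positivity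
      linarith
  · -- upper tail
    intro a ha ha1
    set F := P.filter (fun s => (1 + a) * μ < ((s ∩ S).card : ℝ)) with hFdef
    rcases F.eq_empty_or_nonempty with hF | hF
    · rw [hF]
      simp only [Finset.card_empty, Nat.cast_zero, zero_div]
      exact Real.exp_pos _
    set z : ℝ := 1 + a with hzdef
    set t : ℝ := (1 + a) * μ with htdef
    have hz0 : 0 < z := by rw [hzdef]; linarith
    have hz1 : 1 < z := by rw [hzdef]; linarith
    have hzt : (0:ℝ) < z ^ t := Real.rpow_pos_of_pos hz0 t
    have h5 : Real.exp (μ * (z-1) - t * Real.log z) ≤ Real.exp (-(a^2 * μ / 3)) := by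
      apply Real.exp_le_exp.mpr
      have hL := upper_exponent a ha ha1
      have := mul_le_mul_of_nonneg_right hL hμ0
      rw [hzdef, htdef]
      nlinarith [this]
    have big : (F.card : ℝ) * z ^ t < (Real.exp (-(a^2 * μ / 3)) * (P.card:ℝ)) * z ^ t := by
      calc (F.card : ℝ) * z ^ t = ∑ _s ∈ F, z ^ t := by
            rw [Finset.sum_const, nsmul_eq_mul]
        _ < ∑ s ∈ F, z ^ (((s ∩ S).card : ℕ) : ℝ) := by
            apply Finset.sum_lt_sum_of_nonempty hF
            intro s hs
            have hst := (Finset.mem_filter.mp hs).2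
            exact Real.rpow_lt_rpow_of_exponent_lt hz1 hst
        _ = ∑ s ∈ F, z ^ (s ∩ S).card := by
            apply Finset.sum_congr rfl
            intro s _
            exact Real.rpow_natCast z _
        _ ≤ ∑ s ∈ P, z ^ (s ∩ S).card := by
            apply Finset.sum_le_sum_of_subset_of_nonneg (Finset.filter_subset _ _)
            intro s _ _
            exact pow_nonneg hz0.le _
        _ ≤ (N.choose n : ℝ) * Real.exp (μ * (z - 1)) := hkey z hz0.le
        _ = (N.choose n : ℝ) * Real.exp (μ * (z-1) - t * Real.log z) * z ^ t := by
            rw [Real.rpow_def_of_pos hz0, mul_assoc, ← Real.exp_add]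
            congr 2
            ring
        _ ≤ (N.choose n : ℝ) * Real.exp (-(a^2 * μ / 3)) * z ^ t := by
            exact mul_le_mul_of_nonneg_right (mul_le_mul_of_nonneg_left h5 hCpos) hzt.le
        _ = (Real.exp (-(a^2 * μ / 3)) * (P.card:ℝ)) * z ^ t := by rw [hcardP]; ring
    rw [div_lt_iff₀ hPpos]
    exact (mul_lt_mul_iff_left₀ hzt).mp big
end

section
/- Let k ≥ 1 be an integer and let δ < (12ke)^{-6} be a positive constant. Then the sum over a from 5 to ⌊δn⌋ of binom(n, a)·binom(n - a, 2ka - 1)·(12ka/n)^{4ka} tends to 0 as n → ∞. -/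
open Filter

/-- `n.choose a ≤ (e n / a)^a`. -/
lemma choose_le_exp_bound (n a : ℕ) (ha : 0 < a) :
    (n.choose a : ℝ) ≤ (Real.exp 1 * n / a) ^ a := by
  have hE : (1:ℝ) ≤ Real.exp 1 := Real.one_le_exp (by norm_num)
  have h1 : (n.choose a : ℝ) ≤ (n:ℝ)^a / (a.factorial : ℝ) := by
    simpa using Nat.choose_le_pow_div a n
  have h2 : ((a:ℝ))^a / (a.factorial : ℝ) ≤ Real.exp 1 ^ a := by
    have h := Real.pow_div_factorial_le_exp (x := (a:ℝ)) (by positivity) a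
    have he : Real.exp (a:ℝ) = Real.exp 1 ^ a := by
      rw [← Real.exp_nat_mul, mul_one]
    rwa [he] at h
  have hfa : (0:ℝ) < (a.factorial : ℝ) := by
    exact_mod_cast a.factorial_pos
  have haa : (0:ℝ) < (a:ℝ)^a := by positivity
  calc (n.choose a : ℝ) ≤ (n:ℝ)^a / (a.factorial : ℝ) := h1
    _ = ((n:ℝ)/a)^a * ((a:ℝ)^a / (a.factorial : ℝ)) := by
        rw [div_pow]; field_simp
    _ ≤ ((n:ℝ)/a)^a * Real.exp 1 ^ a := by
        apply mul_le_mul_of_nonneg_left h2 (by positivity)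
    _ = (Real.exp 1 * n / a)^a := by
        rw [← mul_pow]; ring_nf

/-- Main term bound: each summand is at most `((12 k e)^4 * (a/n))^(k a)`. -/
lemma term_le_bound (k a n : ℕ) (hk : 1 ≤ k) (ha : 1 ≤ a) (han : a ≤ n) :
    (n.choose a : ℝ) * ((n - a).choose (2 * k * a - 1) : ℝ) *
      (12 * k * a / (n : ℝ)) ^ (4 * k * a)
    ≤ ((12 * k * Real.exp 1) ^ 4 * ((a:ℝ) / n)) ^ (k * a) := by
  have hE : (1:ℝ) ≤ Real.exp 1 := Real.one_le_exp (by norm_num)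
  have hn : 0 < n := lt_of_lt_of_le ha han
  have hnR : (0:ℝ) < n := by exact_mod_cast hn
  have haR : (0:ℝ) < a := by exact_mod_cast ha
  set E := Real.exp 1 with hEdef
  set m := 2 * k * a - 1 with hm
  have hma : a ≤ m := by
    have : 2 * a ≤ 2 * k * a := by
      have := Nat.mul_le_mul_right a (Nat.mul_le_mul_left 2 hk)
      simpa [mul_assoc] using this
    omega
  have hm2 : m ≤ 2 * k * a := by omega
  have hmR : (a:ℝ) ≤ (m:ℝ) := by exact_mod_cast hma
  have hmpos : 0 < m := lt_of_lt_of_le ha hma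
  have hbase1 : (1:ℝ) ≤ E * n / a := by
    rw [le_div_iff₀ haR]
    calc (1:ℝ) * a = a := one_mul _
      _ ≤ (n:ℝ) := by exact_mod_cast han
      _ = 1 * n := (one_mul _).symm
      _ ≤ E * n := by apply mul_le_mul_of_nonneg_right hE (le_of_lt hnR)
  have hbase0 : (0:ℝ) ≤ E * n / a := le_trans zero_le_one hbase1
  -- bound the two binomial coefficients
  have h1 : (n.choose a : ℝ) ≤ (E * n / a) ^ a := choose_le_exp_bound n a ha
  have h2 : ((n - a).choose m : ℝ) ≤ (E * n / a) ^ (2 * k * a) := by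
    calc ((n - a).choose m : ℝ) ≤ (n.choose m : ℝ) := by
          exact_mod_cast Nat.choose_le_choose m (Nat.sub_le n a)
      _ ≤ (E * n / m) ^ m := choose_le_exp_bound n m hmpos
      _ ≤ (E * n / a) ^ m := by
          apply pow_le_pow_left₀ (by positivity)
          apply div_le_div_of_nonneg_left (by positivity) haR hmR
      _ ≤ (E * n / a) ^ (2 * k * a) := pow_le_pow_right₀ hbase1 hm2
  have hq0 : (0:ℝ) ≤ (12 * k * a / (n:ℝ)) ^ (4 * (k * a)) := by positivity
  have hstep : (n.choose a : ℝ) * ((n - a).choose m : ℝ) *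
      (12 * k * a / (n : ℝ)) ^ (4 * k * a)
      ≤ (E * n / a) ^ (3 * (k * a)) * (12 * k * a / (n : ℝ)) ^ (4 * (k * a)) := by
    have hprod : (n.choose a : ℝ) * ((n - a).choose m : ℝ)
        ≤ (E * n / a) ^ (3 * (k * a)) := by
      calc (n.choose a : ℝ) * ((n - a).choose m : ℝ)
          ≤ (E * n / a) ^ a * (E * n / a) ^ (2 * k * a) := by
            apply mul_le_mul h1 h2 (by positivity) (by positivity)
        _ = (E * n / a) ^ (a + 2 * k * a) := (pow_add _ _ _).symm
        _ ≤ (E * n / a) ^ (3 * (k * a)) := by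
            apply pow_le_pow_right₀ hbase1
            have h1' : a ≤ k * a := Nat.le_mul_of_pos_left a hk
            calc a + 2 * k * a = a + 2 * (k * a) := by ring
              _ ≤ k * a + 2 * (k * a) := by omega
              _ = 3 * (k * a) := by ring
    have : (4 : ℕ) * k * a = 4 * (k * a) := by ring
    rw [this]
    exact mul_le_mul_of_nonneg_right hprod hq0
  refine le_trans hstep ?_
  have hrw : (E * n / a) ^ (3 * (k * a)) * (12 * k * a / (n : ℝ)) ^ (4 * (k * a))
      = ((E * n / a) ^ 3 * (12 * k * a / (n : ℝ)) ^ 4) ^ (k * a) := by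
    rw [mul_pow, ← pow_mul, ← pow_mul]
  rw [hrw]
  apply pow_le_pow_left₀ (by positivity)
  have heq : (E * n / a) ^ 3 * (12 * k * a / (n:ℝ)) ^ 4
      = E ^ 3 * (12 * k) ^ 4 * ((a:ℝ) / n) := by
    field_simp
  rw [heq]
  have : E ^ 3 * (12 * k) ^ 4 ≤ (12 * k * E) ^ 4 := by
    have hE3 : E ^ 3 ≤ E ^ 4 := pow_le_pow_right₀ hE (by norm_num)
    calc E ^ 3 * (12 * k) ^ 4 ≤ E ^ 4 * (12 * k) ^ 4 := by
          apply mul_le_mul_of_nonneg_right hE3 (by positivity)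
      _ = (12 * k * E) ^ 4 := by ring
  apply mul_le_mul_of_nonneg_right this (by positivity)

theorem expander_union_bound_sum (k : ℕ) (hk : 1 ≤ k) (δ : ℝ) (hδ : 0 < δ)
    (hδ2 : δ < (12 * k * Real.exp 1) ^ (-(6 : ℝ))) :
    Tendsto (fun n : ℕ =>
        ∑ a ∈ Finset.Icc 5 ⌊δ * n⌋₊,
          (n.choose a : ℝ) * ((n - a).choose (2 * k * a - 1) : ℝ) *
            (12 * k * a / (n : ℝ)) ^ (4 * k * a))
      atTop (nhds 0) := by
  have hE : (1:ℝ) ≤ Real.exp 1 := Real.one_le_exp (by norm_num)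
  set E := Real.exp 1 with hEdef
  set K : ℝ := 12 * k * E with hKdef
  have hkR : (1:ℝ) ≤ (k:ℝ) := by exact_mod_cast hk
  have hK1 : (1:ℝ) < K := by
    have : (12:ℝ) ≤ 12 * k := by nlinarith
    nlinarith
  have hK0 : (0:ℝ) < K := lt_trans zero_lt_one hK1
  -- rewrite the rpow hypothesis
  have hδ2' : δ < (K ^ (6:ℕ))⁻¹ := by
    have h6 : (-(6:ℝ)) = -((6:ℕ):ℝ) := by norm_num
    rw [h6, Real.rpow_neg hK0.le, Real.rpow_natCast] at hδ2
    exact hδ2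
  have hK6 : (1:ℝ) ≤ K ^ (6:ℕ) := by
    simpa using pow_le_pow_left₀ zero_le_one hK1.le 6
  have hδ1 : δ < 1 := lt_of_lt_of_le hδ2' (inv_le_one_of_one_le₀ hK6)
  set r : ℝ := (K ^ 4 * δ) ^ k with hrdef
  have hx0 : (0:ℝ) ≤ K ^ 4 * δ := by positivity
  have hx1 : K ^ 4 * δ < 1 := by
    have h46 : K ^ 4 < K ^ 6 := pow_lt_pow_right₀ hK1 (by norm_num)
    have : K ^ 4 * δ < K ^ 4 * (K ^ 6)⁻¹ :=
      mul_lt_mul_of_pos_left hδ2' (by positivity)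
    have h2 : K ^ 4 * (K ^ 6)⁻¹ < 1 := by
      rw [← div_eq_mul_inv, div_lt_one (by positivity)]
      exact h46
    linarith
  have hr0 : (0:ℝ) ≤ r := by positivity
  have hr1 : r < 1 := pow_lt_one₀ hx0 hx1 (by omega)
  -- the indicator version of the summand
  set F : ℕ → ℕ → ℝ := fun n a =>
    if a ∈ Finset.Icc 5 ⌊δ * n⌋₊ then
      (n.choose a : ℝ) * ((n - a).choose (2 * k * a - 1) : ℝ) *
        (12 * k * a / (n : ℝ)) ^ (4 * k * a)
    else 0 with hFdef
  have hF0 : ∀ n a, 0 ≤ F n a := by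
    intro n a
    simp only [hFdef]
    split
    · positivity
    · exact le_refl 0
  -- key bound for members of the interval
  have hmem : ∀ n a : ℕ, a ∈ Finset.Icc 5 ⌊δ * n⌋₊ →
      (a:ℝ) ≤ δ * n ∧ a ≤ n ∧ 0 < n := by
    intro n a hamem
    rw [Finset.mem_Icc] at hamem
    have h1 : (a:ℝ) ≤ δ * n := by
      calc (a:ℝ) ≤ (⌊δ * n⌋₊ : ℝ) := by exact_mod_cast hamem.2
        _ ≤ δ * n := Nat.floor_le (by positivity)
    have hnn : (0:ℝ) < n := by
      by_contra h
      push_neg at h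
      have : (a:ℝ) ≤ 0 := le_trans h1 (by nlinarith)
      have : (5:ℝ) ≤ (a:ℝ) := by exact_mod_cast hamem.1
      linarith
    have hn : 0 < n := by exact_mod_cast hnn
    have han : a ≤ n := by
      have : (a:ℝ) ≤ (n:ℝ) := by nlinarith
      exact_mod_cast this
    exact ⟨h1, han, hn⟩
  have hFle : ∀ n a : ℕ, F n a ≤ r ^ a := by
    intro n a
    simp only [hFdef]
    split
    case isTrue hmem' =>
      obtain ⟨h1, han, hn⟩ := hmem n a hmem'
      have ha5 : 5 ≤ a := (Finset.mem_Icc.mp hmem').1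
      have hnR : (0:ℝ) < n := by exact_mod_cast hn
      calc (n.choose a : ℝ) * ((n - a).choose (2 * k * a - 1) : ℝ) *
            (12 * k * a / (n : ℝ)) ^ (4 * k * a)
          ≤ (K ^ 4 * ((a:ℝ) / n)) ^ (k * a) :=
            term_le_bound k a n hk (by omega) han
        _ ≤ (K ^ 4 * δ) ^ (k * a) := by
            apply pow_le_pow_left₀ (by positivity)
            apply mul_le_mul_of_nonneg_left _ (by positivity)
            rw [div_le_iff₀ hnR]
            linarith [h1]
        _ = r ^ a := by rw [hrdef, ← pow_mul]
    case isFalse => positivity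
  -- summability of the geometric bound
  have hsum : Summable (fun a : ℕ => r ^ a) := summable_geometric_of_lt_one hr0 hr1
  -- pointwise convergence to 0
  have hpt : ∀ a : ℕ, Tendsto (fun n => F n a) atTop (nhds 0) := by
    intro a
    by_cases ha5 : 5 ≤ a
    · have hka : k * a ≠ 0 := by positivity
      apply squeeze_zero (fun n => hF0 n a)
        (g := fun n : ℕ => (K ^ 4 * ((a:ℝ) / n)) ^ (k * a))
      · intro n
        simp only [hFdef]
        split
        next hmem' =>
          obtain ⟨h1, han, hn⟩ := hmem n a hmem'
          exact term_le_bound k a n hk (by omega) han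
        next => positivity
      · have h0 : Tendsto (fun n : ℕ => K ^ 4 * ((a:ℝ) / n)) atTop (nhds 0) := by
          have := tendsto_const_div_atTop_nhds_zero_nat (K ^ 4 * (a:ℝ))
          simpa [mul_div_assoc] using this
        have := h0.pow (k * a)
        simpa [zero_pow hka] using this
    · have : (fun n => F n a) = fun _ => (0:ℝ) := by
        funext n
        simp only [hFdef]
        rw [if_neg]
        rw [Finset.mem_Icc]
        omega
      rw [this]
      exact tendsto_const_nhds
  -- dominated convergence (Tannery)
  have key := tendsto_tsum_of_dominated_convergence (f := F) (g := fun _ => (0:ℝ))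
    (bound := fun a : ℕ => r ^ a) hsum hpt
    (Eventually.of_forall (fun n => by
      intro a
      rw [Real.norm_eq_abs, abs_of_nonneg (hF0 n a)]
      exact hFle n a))
  have hfun : (fun n : ℕ =>
      ∑ a ∈ Finset.Icc 5 ⌊δ * n⌋₊,
        (n.choose a : ℝ) * ((n - a).choose (2 * k * a - 1) : ℝ) *
          (12 * k * a / (n : ℝ)) ^ (4 * k * a)) = fun n => ∑' a, F n a := by
    funext n
    rw [tsum_eq_sum (s := Finset.Icc 5 ⌊δ * (n:ℕ)⌋₊)
      (fun b hb => by simp only [hFdef]; exact if_neg hb)]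
    refine Finset.sum_congr rfl (fun a hamem => ?_)
    simp only [hFdef]
    rw [if_pos hamem]
  rw [hfun]
  simpa [tsum_zero] using key
end

section
/- Suppose a graph G on vertex set V with |V| = n has the property that there is no pair of disjoint vertex sets U, W ⊆ V with |U| = |W| = R and no edge of G between U and W. If additionally G is an (R, 2k)-expander, then G is a ((n+k)/(4k), 2k)-expander, i.e., every set X ⊆ V with |X| ≤ (n+k)/(4k) satisfies |N_G(X)| ≥ 2k|X|. -/
theorem expander_upgrade
    {V : Type*} [Fintype V] [DecidableEq V] (G : SimpleGraph V) [DecidableRel G.Adj]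
    (n k R : ℕ) (hn : Fintype.card V = n) (hk : 1 ≤ k) (hR : 0 < R)
    (hR2 : (R : ℝ) ≤ ((n : ℝ) + k) / (4 * k))
    (hpair : ¬ ∃ U W : Finset V, Disjoint U W ∧ U.card = R ∧ W.card = R ∧
      ∀ u ∈ U, ∀ w ∈ W, ¬ G.Adj u w)
    (hexp : ∀ U : Finset V, U.card ≤ R → 2 * k * U.card ≤ (extNbhd G U).card) :
    ∀ X : Finset V, (X.card : ℝ) ≤ ((n : ℝ) + k) / (4 * k) →
      2 * k * X.card ≤ (extNbhd G X).card := by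
  intro X hX
  by_cases hXR : X.card ≤ R
  · exact hexp X hXR
  push_neg at hXR
  by_contra hcon
  push_neg at hcon
  set N := extNbhd G X with hNdef
  set C := Finset.univ \ (X ∪ N) with hCdef
  have hk1 : (1:ℝ) ≤ k := by exact_mod_cast hk
  have hkpos : (0:ℝ) < 4*k := by linarith
  have hX4 : (X.card:ℝ) * (4*k) ≤ (n:ℝ) + k := (le_div_iff₀ hkpos).1 hX
  have hR4 : (R:ℝ) * (4*k) ≤ (n:ℝ) + k := (le_div_iff₀ hkpos).1 hR2
  have hR1 : (1:ℝ) ≤ R := by exact_mod_cast hR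
  have hun : (X ∪ N).card ≤ n := by
    rw [← hn, ← Finset.card_univ]; exact Finset.card_le_card (Finset.subset_univ _)
  have hRC : R ≤ C.card := by
    have hcard : C.card = n - (X ∪ N).card := by
      rw [hCdef, Finset.card_sdiff_of_subset (Finset.subset_univ _), Finset.card_univ, hn]
    have hcardR : (C.card : ℝ) = (n:ℝ) - (X ∪ N).card := by
      rw [hcard, Nat.cast_sub hun]
    have h1 : ((X ∪ N).card : ℝ) ≤ (X.card:ℝ) + N.card := by
      exact_mod_cast Finset.card_union_le X N
    have h2 : (N.card : ℝ) + 1 ≤ 2*k*X.card := by exact_mod_cast hcon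
    have hRX : (R:ℝ) + 1 ≤ X.card := by exact_mod_cast hXR
    have : (R:ℝ) ≤ C.card := by
      rw [hcardR]
      nlinarith [mul_le_mul_of_nonneg_left hX4 (by linarith : (0:ℝ) ≤ 2*k+1),
        mul_nonneg (by linarith : (0:ℝ) ≤ k - 1) (by nlinarith : (0:ℝ) ≤ (n:ℝ) - 3*k)]
    exact_mod_cast this
  obtain ⟨U, hUX, hUcard⟩ := Finset.exists_subset_card_eq (s := X) (le_of_lt hXR)
  obtain ⟨W, hWC, hWcard⟩ := Finset.exists_subset_card_eq (s := C) hRC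
  apply hpair
  refine ⟨U, W, ?_, hUcard, hWcard, ?_⟩
  · rw [Finset.disjoint_left]
    intro a haU haW
    have : a ∈ C := hWC haW
    rw [hCdef, Finset.mem_sdiff] at this
    exact this.2 (Finset.mem_union_left _ (hUX haU))
  · intro u hu w hw hadj
    have hwC : w ∈ C := hWC hw
    rw [hCdef, Finset.mem_sdiff] at hwC
    have hwX : w ∉ X := fun h => hwC.2 (Finset.mem_union_left _ h)
    have hwN : w ∈ N := by
      rw [hNdef, extNbhd, Finset.mem_filter]
      exact ⟨Finset.mem_univ _, hwX, u, hUX hu, hadj⟩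
    exact hwC.2 (Finset.mem_union_right _ hwN)
end
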